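/- Let B be an abelian C*-subalgebra of a C*-algebra A containing an approximate unit of A. If B is maximal abelian in A, then every n ∈ N(B) that commutes with all elements of B belongs to B; conversely, if B is regular (the normalizer N(B) generates A as a C*-algebra) and every element of N(B) commuting with B lies in B, then B is maximal abelian in A. -/

import Mathlib

open Filter in
/-- `e : ι → A` (along the filter `l`) is an approximate unit of `A` contained
in the C*-subalgebra `B`. -/
def IsApproxUnitIn {A : Type*} [NormedRing A] [StarRing A] [PartialOrder A]
    [NormedAlgebra ℂ A] [StarModule ℂ A] (B : StarSubalgebra ℂ A)
    {ι : Type*} (l : Filter ι) (e : ι → A) : Prop :=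
  l.NeBot ∧ (∀ i, e i ∈ B) ∧ (∀ i, 0 ≤ e i) ∧ (∀ i, ‖e i‖ ≤ 1) ∧
    ∀ a : A, Tendsto (fun i => e i * a) l (nhds a) ∧
      Tendsto (fun i => a * e i) l (nhds a)

/-- The normalizer `N(B) = {n : n B n* ⊆ B and n* B n ⊆ B}` of a subalgebra. -/
def starNormalizer {A : Type*} [NormedRing A] [StarRing A] [NormedAlgebra ℂ A]
    [StarModule ℂ A] (B : StarSubalgebra ℂ A) : Set A :=
  {n : A | ∀ b ∈ B, n * b * star n ∈ B ∧ star n * b * n ∈ B}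

open NormedSpace in
theorem sa_comm_mem {A : Type*} [NormedRing A] [StarRing A] [CStarRing A]
    [NormedAlgebra ℂ A] [StarModule ℂ A] [CompleteSpace A]
    (B : StarSubalgebra ℂ A) (hBclosed : IsClosed (B : Set A))
    (hyp : ∀ n ∈ starNormalizer B, (∀ b ∈ B, n * b = b * n) → n ∈ B)
    (c : A) (hc : star c = c) (hcm : ∀ b ∈ B, c * b = b * c) : c ∈ B := by
  set x : A := Complex.I • c with hxdef
  have hxstar : star x = -x := by
    rw [hxdef, star_smul, hc, Complex.star_def, Complex.conj_I, neg_smul]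
  have hmem : ∀ t : ℝ, exp (t • x) ∈ B := by
    intro t
    have hsk : star (t • x) = -(t • x) := by
      rw [← Complex.coe_smul, star_smul, hxstar]
      simp [Complex.star_def, Complex.conj_ofReal]
    have hcomm : ∀ b ∈ B, exp (t • x) * b = b * exp (t • x) := by
      intro b hb
      have h1 : Commute x b := Commute.smul_left (hcm b hb) Complex.I
      exact (Commute.smul_left h1 t).exp_left
    have hu1 : exp (t • x) * star (exp (t • x)) = 1 := by
      let +nondep : NormedAlgebra ℚ A := .restrictScalars ℚ ℂ A
      rw [star_exp, hsk, ← exp_add_of_commute ((Commute.refl (t • x)).neg_right),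
        add_neg_cancel, exp_zero]
    have hu2 : star (exp (t • x)) * exp (t • x) = 1 := by
      let +nondep : NormedAlgebra ℚ A := .restrictScalars ℚ ℂ A
      rw [star_exp, hsk, ← exp_add_of_commute ((Commute.refl (t • x)).neg_left),
        neg_add_cancel, exp_zero]
    refine hyp _ ?_ hcomm
    intro b hb
    have hcs : star (exp (t • x)) * b = b * star (exp (t • x)) := by
      have := congrArg star (hcomm (star b) (star_mem hb))
      simpa [star_mul, mul_assoc] using this.symm
    constructor
    · rw [hcomm b hb, mul_assoc, hu1, mul_one]; exact hb
    · rw [hcs, mul_assoc, hu2, mul_one]; exact hb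
  have hd : HasDerivAt (fun t : ℝ => exp (t • x)) x 0 := by
    simpa using hasDerivAt_exp_smul_const (𝕂 := ℝ) x 0
  rw [hasDerivAt_iff_tendsto_slope] at hd
  have hx_mem : x ∈ B := by
    refine hBclosed.mem_of_tendsto hd (Filter.Eventually.of_forall fun t => ?_)
    rw [slope_def_module]
    rw [← Complex.coe_smul]
    exact B.smul_mem (sub_mem (hmem t) (hmem 0)) _
  have : c = (-Complex.I) • x := by
    rw [hxdef, smul_smul, show (-Complex.I) * Complex.I = 1 by
      rw [neg_mul, Complex.I_mul_I, neg_neg], one_smul]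
  rw [this]
  exact B.smul_mem hx_mem _


/-- Let `B` be an abelian C*-subalgebra containing an
approximate unit of `A`.  If `B` is maximal abelian then every normalizer
commuting with `B` lies in `B`; conversely if `B` is regular (the C*-algebra
generated by `N(B)` is all of `A`) and every normalizer commuting with `B`
lies in `B`, then `B` is maximal abelian. -/
theorem stmt8 {A : Type*} [NormedRing A] [StarRing A] [CStarRing A]
    [NormedAlgebra ℂ A] [StarModule ℂ A] [CompleteSpace A]
    [PartialOrder A] [StarOrderedRing A]
    (B : StarSubalgebra ℂ A) (hBclosed : IsClosed (B : Set A))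
    (hBcomm : ∀ b ∈ B, ∀ b' ∈ B, b * b' = b' * b)
    {ι : Type*} (l : Filter ι) (e : ι → A) (he : IsApproxUnitIn B l e) :
    ((∀ a : A, (∀ b ∈ B, a * b = b * a) → a ∈ B) →
      ∀ n ∈ starNormalizer B, (∀ b ∈ B, n * b = b * n) → n ∈ B) ∧
    (((StarAlgebra.adjoin ℂ (starNormalizer B)).topologicalClosure = ⊤ ∧
        ∀ n ∈ starNormalizer B, (∀ b ∈ B, n * b = b * n) → n ∈ B) →
      ∀ a : A, (∀ b ∈ B, a * b = b * a) → a ∈ B) := by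
  constructor
  · intro h n _ hcomm; exact h n hcomm
  · rintro ⟨-, hyp⟩ a ha
    have hstar : ∀ b ∈ B, star a * b = b * star a := by
      intro b hb
      calc star a * b = star (star b * a) := by rw [star_mul, star_star]
        _ = star (a * star b) := by rw [ha (star b) (star_mem hb)]
        _ = b * star a := by rw [star_mul, star_star]
    set x : A := (2⁻¹ : ℂ) • (a + star a) with hxdef
    set y : A := (-(2⁻¹) * Complex.I : ℂ) • (a - star a) with hydef
    have hx_sa : star x = x := by
      rw [hxdef, star_smul, star_add, star_star]
      simp [add_comm, Complex.conj_ofNat]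
    have hy_sa : star y = y := by
      rw [hydef, star_smul, star_sub, star_star]
      have h2 : star (-(2⁻¹) * Complex.I : ℂ) = 2⁻¹ * Complex.I := by
        simp [Complex.star_def, Complex.conj_ofNat]
      rw [h2, show ((2⁻¹ : ℂ) * Complex.I) = -(-(2⁻¹) * Complex.I) by ring,
        neg_smul, ← smul_neg, neg_sub]
    have hx_comm : ∀ b ∈ B, x * b = b * x := by
      intro b hb
      rw [hxdef, smul_mul_assoc, mul_smul_comm, add_mul, mul_add, ha b hb, hstar b hb]
    have hy_comm : ∀ b ∈ B, y * b = b * y := by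
      intro b hb
      rw [hydef, smul_mul_assoc, mul_smul_comm, sub_mul, mul_sub, ha b hb, hstar b hb]
    have hx := sa_comm_mem B hBclosed hyp x hx_sa hx_comm
    have hy := sa_comm_mem B hBclosed hyp y hy_sa hy_comm
    have hdecomp : a = x + Complex.I • y := by
      rw [hxdef, hydef, smul_smul,
        show Complex.I * (-(2⁻¹) * Complex.I) = (2⁻¹ : ℂ) by
          rw [show Complex.I * (-(2⁻¹) * Complex.I) = -(2⁻¹ : ℂ) * (Complex.I * Complex.I) by
            ring, Complex.I_mul_I]; ring]
      rw [smul_add, smul_sub]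
      abel_nf
      module
    rw [hdecomp]
    exact B.add_mem hx (B.smul_mem hy _)
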